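/- Let n ≥ 4 and let Q_{2^n} = ⟨a, b | a^{2^{n-1}} = 1, a^{2^{n-2}} = b^2, b^{-1}ab = a^{-1}⟩ be the generalized quaternion group of order 2^n. Then CD(Q_{2^n}) = { ⟨a⟩ }, i.e., the only subgroup of Q_{2^n} attaining the maximal Chermak–Delgado measure is the cyclic subgroup ⟨a⟩ of index 2. -/

import Mathlib

/-- The Chermak–Delgado measure of a subgroup `H` of `G`: `m_G(H) = |H| * |C_G(H)|`. -/
noncomputable def cdMeasure {G : Type*} [Group G] (H : Subgroup G) : ℕ :=
  Nat.card H * Nat.card (Subgroup.centralizer (H : Set G))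

/-- `m*(G)`, the maximal Chermak–Delgado measure over all subgroups of `G`. -/
noncomputable def cdMax (G : Type*) [Group G] : ℕ :=
  sSup (Set.range (cdMeasure (G := G)))

/-- The Chermak–Delgado lattice of `G`, as the set of subgroups attaining `m*(G)`. -/
def cdLattice (G : Type*) [Group G] : Set (Subgroup G) :=
  {H : Subgroup G | cdMeasure H = cdMax G}

namespace CDQAux

open QuaternionGroup Subgroup

set_option linter.unusedSectionVars false
variable {m : ℕ} [NeZero m]

lemma inv_a (i : ZMod (2*m)) : (a i : QuaternionGroup m)⁻¹ = a (-i) := rfl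
lemma inv_xa (i : ZMod (2*m)) : (xa i : QuaternionGroup m)⁻¹ = xa ((m : ZMod (2*m)) + i) := rfl

lemma two_eq_zero_iff (i : ZMod (2*m)) : i + i = 0 ↔ i = 0 ∨ i = (m : ZMod (2*m)) := by
  constructor
  · intro h
    have h2 : ((2 * i.val : ℕ) : ZMod (2*m)) = 0 := by
      push_cast [ZMod.natCast_zmod_val]
      linear_combination h
    rw [ZMod.natCast_eq_zero_iff] at h2
    have hm : m ∣ i.val := (mul_dvd_mul_iff_left (two_ne_zero)).mp h2
    obtain ⟨c, hc⟩ := hm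
    have hv : i.val < 2 * m := i.val_lt
    have hc2 : c < 2 := by
      by_contra hc2
      push_neg at hc2
      have : 2 * m ≤ m * c := by
        rw [mul_comm 2 m]; exact Nat.mul_le_mul_left m hc2
      omega
    interval_cases c
    · left; rw [← ZMod.natCast_zmod_val i, hc]; simp
    · right; rw [← ZMod.natCast_zmod_val i, hc]; simp
  · rintro (rfl | rfl)
    · simp
    · rw [← Nat.cast_add, ← two_mul, ZMod.natCast_self]

local notation "A" => Subgroup.zpowers (a 1 : QuaternionGroup m)

lemma mem_A_iff (x : QuaternionGroup m) : x ∈ A ↔ ∃ i, x = a i := by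
  constructor
  · rintro ⟨k, rfl⟩
    rcases k with k | k
    · exact ⟨k, by show (a 1 : QuaternionGroup m) ^ (k:ℤ) = a k; rw [zpow_natCast, a_one_pow]⟩
    · refine ⟨-(k+1 : ℕ), ?_⟩
      show (a 1 : QuaternionGroup m) ^ (Int.negSucc k) = _
      rw [zpow_negSucc, a_one_pow, inv_a]
  · rintro ⟨i, rfl⟩
    exact ⟨(i.val : ℤ), by show (a 1 : QuaternionGroup m) ^ (i.val:ℤ) = a i; rw [zpow_natCast, a_one_pow, ZMod.natCast_zmod_val]⟩

lemma card_A : Nat.card A = 2 * m := by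
  rw [Nat.card_zpowers, orderOf_a_one]

lemma a_comm_xa_iff (i j : ZMod (2*m)) :
    (a i : QuaternionGroup m) * xa j = xa j * a i ↔ i + i = 0 := by
  rw [a_mul_xa, xa_mul_a]
  constructor
  · intro h
    have := xa.inj h
    linear_combination -this
  · intro h
    congr 1
    linear_combination -h

lemma xa_comm_xa_iff (i j : ZMod (2*m)) :
    (xa i : QuaternionGroup m) * xa j = xa j * xa i ↔ i - j = 0 ∨ i - j = (m : ZMod (2*m)) := by
  rw [xa_mul_xa, xa_mul_xa, ← two_eq_zero_iff]
  constructor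
  · intro h
    have := a.inj h
    linear_combination -this
  · intro h
    congr 1
    linear_combination -h

lemma card_le_of_subset {H : Subgroup (QuaternionGroup m)} {S : Set (QuaternionGroup m)}
    (h : (H : Set (QuaternionGroup m)) ⊆ S) : Nat.card H ≤ S.ncard := by
  have := Set.ncard_le_ncard h S.toFinite
  rwa [← Nat.card_coe_set_eq] at this

lemma centralizer_le_A {H : Subgroup (QuaternionGroup m)} {i : ZMod (2*m)}
    (hi : a i ∈ H) (h2 : i + i ≠ 0) : centralizer (H : Set (QuaternionGroup m)) ≤ A := by
  intro g hg
  rw [mem_centralizer_iff] at hg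
  rw [mem_A_iff]
  cases g with
  | a k => exact ⟨k, rfl⟩
  | xa k => exact absurd ((a_comm_xa_iff i k).mp (hg _ hi)) h2

lemma comm_xa_mem {j : ZMod (2*m)} {g : QuaternionGroup m} (h : xa j * g = g * xa j) :
    g ∈ ({a 0, a (m : ZMod (2*m)), xa j, xa (j + (m : ZMod (2*m)))} : Set (QuaternionGroup m)) := by
  cases g with
  | a k =>
    have hk : k + k = 0 := (a_comm_xa_iff k j).mp h.symm
    rcases (two_eq_zero_iff k).mp hk with rfl | rfl
    · left; rfl
    · right; left; rfl
  | xa k =>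
    rcases (xa_comm_xa_iff j k).mp h with h1 | h1
    · right; right; left; congr 1; linear_combination -h1
    · have hmm : (m : ZMod (2*m)) + m = 0 := by
        rw [← Nat.cast_add, ← two_mul, ZMod.natCast_self]
      right; right; right; congr 1; linear_combination -h1 - hmm

lemma card_top_bound (H : Subgroup (QuaternionGroup m)) : Nat.card H ≤ 4 * m := by
  have h4 : Nat.card (QuaternionGroup m) = 4 * m := by
    rw [Nat.card_eq_fintype_card, QuaternionGroup.card]
  exact h4 ▸ Subgroup.card_le_card_group H

lemma hmm_zero : ((m : ZMod (2*m)) + m) = 0 := by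
  rw [← Nat.cast_add, ← two_mul, ZMod.natCast_self]

lemma measure_lt (hm : 4 ≤ m) (H : Subgroup (QuaternionGroup m)) (hne : H ≠ A) :
    cdMeasure H < 2 * m * (2 * m) := by
  unfold cdMeasure
  by_cases hxa : ∃ j, xa j ∈ H
  · obtain ⟨j, hj⟩ := hxa
    by_cases hi : ∃ i, a i ∈ H ∧ i + i ≠ 0
    · obtain ⟨i, hiH, hi2⟩ := hi
      have hC : (centralizer (H : Set (QuaternionGroup m)) : Set (QuaternionGroup m)) ⊆
          {a 0, a (m : ZMod (2*m))} := by
        intro g hg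
        have hgA := centralizer_le_A hiH hi2 hg
        rw [mem_A_iff] at hgA
        obtain ⟨k, rfl⟩ := hgA
        rw [SetLike.mem_coe, mem_centralizer_iff] at hg
        have hk := (a_comm_xa_iff k j).mp (hg _ hj).symm
        rcases (two_eq_zero_iff k).mp hk with rfl | rfl
        · left; rfl
        · right; rfl
      have h1 : Nat.card (centralizer (H : Set (QuaternionGroup m))) ≤ 2 := by
        refine (card_le_of_subset hC).trans ?_
        refine (Set.ncard_insert_le _ _).trans ?_
        simp [Set.ncard_singleton]
      have h2 := card_top_bound H
      calc Nat.card H * Nat.card (centralizer (H : Set (QuaternionGroup m)))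
          ≤ 4 * m * 2 := Nat.mul_le_mul h2 h1
        _ < 2*m*(2*m) := by nlinarith
    · push_neg at hi
      have quad_card : ({a 0, a (m : ZMod (2*m)), xa j,
          xa (j + (m : ZMod (2*m)))} : Set (QuaternionGroup m)).ncard ≤ 4 := by
        refine (Set.ncard_insert_le _ _).trans ?_
        have := (Set.ncard_insert_le (a (m : ZMod (2*m)))
          ({xa j, xa (j + (m : ZMod (2*m)))} : Set (QuaternionGroup m)))
        have h3 := Set.ncard_insert_le (xa j)
          ({xa (j + (m : ZMod (2*m)))} : Set (QuaternionGroup m))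
        simp only [Set.ncard_singleton] at *
        omega
      have hH : (H : Set (QuaternionGroup m)) ⊆
          {a 0, a (m : ZMod (2*m)), xa j, xa (j + (m : ZMod (2*m)))} := by
        intro g hg
        cases g with
        | a k =>
          rcases (two_eq_zero_iff k).mp (hi k hg) with rfl | rfl
          · left; rfl
          · right; left; rfl
        | xa k =>
          have hmem : (xa k) * (xa j)⁻¹ ∈ H := mul_mem hg (inv_mem hj)
          rw [inv_xa, xa_mul_xa] at hmem
          have heq : ((m : ZMod (2*m)) + ((m : ZMod (2*m)) + j) - k) = j - k := by
            linear_combination hmm_zero (m := m)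
          rw [heq] at hmem
          have h2 := hi _ hmem
          rcases (two_eq_zero_iff _).mp h2 with h3 | h3
          · right; right; left; congr 1
            linear_combination -h3
          · right; right; right; congr 1
            linear_combination -h3 - hmm_zero (m := m)
      have hCsub : (centralizer (H : Set (QuaternionGroup m)) : Set (QuaternionGroup m)) ⊆
          {a 0, a (m : ZMod (2*m)), xa j, xa (j + (m : ZMod (2*m)))} := by
        intro g hg
        rw [SetLike.mem_coe, mem_centralizer_iff] at hg
        exact comm_xa_mem (hg _ hj)
      have h1 : Nat.card H ≤ 4 := (card_le_of_subset hH).trans quad_card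
      have h2 : Nat.card (centralizer (H : Set (QuaternionGroup m))) ≤ 4 :=
        (card_le_of_subset hCsub).trans quad_card
      calc Nat.card H * Nat.card (centralizer (H : Set (QuaternionGroup m)))
          ≤ 4 * 4 := Nat.mul_le_mul h1 h2
        _ < 2*m*(2*m) := by nlinarith
  · push_neg at hxa
    have hHA : H ≤ A := by
      intro g hg
      rw [mem_A_iff]
      cases g with
      | a k => exact ⟨k, rfl⟩
      | xa k => exact absurd hg (hxa k)
    have hcard : Nat.card H ≤ m := by
      have hdvd : Nat.card H ∣ 2 * m := by
        have := Subgroup.card_dvd_of_le hHA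
        rwa [card_A] at this
      have hne' : Nat.card H ≠ 2 * m := by
        intro h
        exact hne (Subgroup.eq_of_le_of_card_ge hHA (by rw [card_A, ← h]))
      obtain ⟨c, hc⟩ := hdvd
      rcases Nat.lt_or_ge c 2 with h2 | h2
      · interval_cases c <;> omega
      · have h3 := Nat.mul_le_mul_left (Nat.card H) h2
        rw [← hc] at h3
        omega
    by_cases hi : ∃ i, a i ∈ H ∧ i + i ≠ 0
    · obtain ⟨i, hiH, hi2⟩ := hi
      have hC : Nat.card (centralizer (H : Set (QuaternionGroup m))) ≤ 2 * m := by
        have := Subgroup.card_le_of_le (centralizer_le_A hiH hi2)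
        rwa [card_A] at this
      calc Nat.card H * Nat.card (centralizer (H : Set (QuaternionGroup m)))
          ≤ m * (2*m) := Nat.mul_le_mul hcard hC
        _ < 2*m*(2*m) := by nlinarith
    · push_neg at hi
      have hH : (H : Set (QuaternionGroup m)) ⊆ {a 0, a (m : ZMod (2*m))} := by
        intro g hg
        cases g with
        | a k =>
          rcases (two_eq_zero_iff k).mp (hi k hg) with rfl | rfl
          · left; rfl
          · right; rfl
        | xa k => exact absurd hg (hxa k)
      have h1 : Nat.card H ≤ 2 := by
        refine (card_le_of_subset hH).trans ?_
        refine (Set.ncard_insert_le _ _).trans ?_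
        simp [Set.ncard_singleton]
      have h2 := card_top_bound (centralizer (H : Set (QuaternionGroup m)))
      calc Nat.card H * Nat.card (centralizer (H : Set (QuaternionGroup m)))
          ≤ 2 * (4 * m) := Nat.mul_le_mul h1 h2
        _ < 2*m*(2*m) := by nlinarith

lemma measure_A (hm : 4 ≤ m) : cdMeasure (A : Subgroup (QuaternionGroup m)) = 2*m*(2*m) := by
  have hCA : centralizer ((A : Subgroup (QuaternionGroup m)) : Set (QuaternionGroup m)) = A := by
    apply le_antisymm
    · refine centralizer_le_A (Subgroup.mem_zpowers _) ?_
      intro h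
      rw [show ((1:ZMod (2*m)) + 1) = ((2:ℕ) : ZMod (2*m)) by push_cast; ring,
        ZMod.natCast_eq_zero_iff] at h
      have := Nat.le_of_dvd (by norm_num) h
      omega
    · intro g hg
      rw [mem_centralizer_iff]
      intro h hh
      rw [SetLike.mem_coe, mem_A_iff] at hh
      rw [mem_A_iff] at hg
      obtain ⟨i, rfl⟩ := hg
      obtain ⟨k, rfl⟩ := hh
      rw [a_mul_a, a_mul_a, add_comm]
  rw [cdMeasure, hCA, card_A]

lemma main_lemma (hm : 4 ≤ m) :
    cdLattice (QuaternionGroup m) = {(A : Subgroup (QuaternionGroup m))} := by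
  have hub : ∀ x ∈ Set.range (cdMeasure (G := QuaternionGroup m)), x ≤ 2*m*(2*m) := by
    rintro x ⟨H, rfl⟩
    by_cases h : H = A
    · rw [h, measure_A hm]
    · exact (measure_lt hm H h).le
  have hmax : cdMax (QuaternionGroup m) = 2*m*(2*m) := by
    apply le_antisymm
    · exact csSup_le ⟨cdMeasure (A : Subgroup (QuaternionGroup m)), ⟨A, rfl⟩⟩ hub
    · have hmem : cdMeasure (A : Subgroup (QuaternionGroup m)) ∈
          Set.range (cdMeasure (G := QuaternionGroup m)) := ⟨A, rfl⟩
      have hb : BddAbove (Set.range (cdMeasure (G := QuaternionGroup m))) :=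
        ⟨2*m*(2*m), hub⟩
      have := le_csSup hb hmem
      rwa [measure_A hm] at this
  ext H
  simp only [cdLattice, Set.mem_setOf_eq, Set.mem_singleton_iff, hmax]
  constructor
  · intro h
    by_contra hne
    exact absurd h (measure_lt hm H hne).ne
  · rintro rfl
    exact measure_A hm

end CDQAux

/-- For `n ≥ 4`, the Chermak–Delgado lattice of the generalized quaternion group `Q_{2^n}`
(of order `2^n`, realized as the dicyclic group `QuaternionGroup (2^(n-2))`) consists of
exactly one subgroup: the cyclic subgroup `⟨a⟩` of index 2. -/
theorem cdLattice_quaternionGroup (n : ℕ) (hn : 4 ≤ n) :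
    cdLattice (QuaternionGroup (2 ^ (n - 2))) =
      {Subgroup.zpowers (QuaternionGroup.a 1 : QuaternionGroup (2 ^ (n - 2)))} := by
  haveI : NeZero (2 ^ (n - 2)) := ⟨(Nat.pow_pos (by norm_num) : 0 < 2 ^ (n - 2)).ne'⟩
  refine CDQAux.main_lemma ?_
  calc (4 : ℕ) = 2 ^ 2 := by norm_num
    _ ≤ 2 ^ (n - 2) := Nat.pow_le_pow_right (by norm_num) (by omega)
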